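/- For any strategic game H and every ordinal α, property C(α) implies property D(α). -/

import Mathlib

universe u

/-- Transfinite iterations of an operator on a complete lattice:
`F^0 = ⊤`, `F^(α+1) = F (F^α)`, and `F^β = ⨅_{α<β} F^α` for limit `β`. -/
noncomputable def iterate {D : Type u} [CompleteLattice D] (F : D → D) (α : Ordinal.{0}) : D :=
  Ordinal.limitRecOn α ⊤ (fun _ ih => F ih) (fun β _ ih => ⨅ (γ : Ordinal) (h : γ < β), ih γ h)

/-- `R` is a relaxation of `F`. -/
def Relaxation {D : Type u} [CompleteLattice D] (F R : D → D) : Prop :=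
  ∀ α : Ordinal.{0},
    F (iterate R α) ≤ R (iterate R α) ∧
    (F (iterate R α) ≤ iterate R α → R (iterate R α) ≤ iterate R α) ∧
    (R (iterate R α) = iterate R α → F (iterate R α) = iterate R α)

section Games

variable {n : ℕ} {T : Fin n → Type u}

/-- `GR` operator: strategies that are a best response *in the initial game* to
some opponent belief held in `G`. -/
def GR (p : ∀ i : Fin n, (∀ j, T j) → ℝ) (G : ∀ i, Set (T i)) : ∀ i, Set (T i) :=
  fun i => {s : T i | ∃ μ : ∀ j, T j, (∀ j, j ≠ i → μ j ∈ G j) ∧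
    ∀ s' : T i, p i (Function.update μ i s') ≤ p i (Function.update μ i s)}

/-- `LR` operator: strategies that are a best response *in `G`* to
some opponent belief held in `G`. -/
def LR (p : ∀ i : Fin n, (∀ j, T j) → ℝ) (G : ∀ i, Set (T i)) : ∀ i, Set (T i) :=
  fun i => {s : T i | ∃ μ : ∀ j, T j, (∀ j, j ≠ i → μ j ∈ G j) ∧
    ∀ s' ∈ G i, p i (Function.update μ i s') ≤ p i (Function.update μ i s)}

/-- `s'` strictly dominates `s` on the restriction `G`. -/
def Dom (p : ∀ i : Fin n, (∀ j, T j) → ℝ) (G : ∀ i, Set (T i)) (i : Fin n)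
    (s' s : T i) : Prop :=
  ∀ μ : ∀ j, T j, (∀ j, j ≠ i → μ j ∈ G j) →
    p i (Function.update μ i s) < p i (Function.update μ i s')

/-- `GS` operator: strategies not strictly dominated on `G` by any strategy of the initial game. -/
def GS (p : ∀ i : Fin n, (∀ j, T j) → ℝ) (G : ∀ i, Set (T i)) : ∀ i, Set (T i) :=
  fun i => {s : T i | ¬ ∃ s' : T i, Dom p G i s' s}

/-- `LS` operator: strategies not strictly dominated on `G` by any strategy in `G`. -/
def LS (p : ∀ i : Fin n, (∀ j, T j) → ℝ) (G : ∀ i, Set (T i)) : ∀ i, Set (T i) :=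
  fun i => {s : T i | ¬ ∃ s' ∈ G i, Dom p G i s' s}

/-- Property B: to each belief in the initial game a best response (in the initial game) exists. -/
def PropB (p : ∀ i : Fin n, (∀ j, T j) → ℝ) : Prop :=
  ∀ (i : Fin n) (μ : ∀ j, T j), ∃ s : T i, ∀ s' : T i,
    p i (Function.update μ i s') ≤ p i (Function.update μ i s)

/-- Property D(α). -/
def PropD (p : ∀ i : Fin n, (∀ j, T j) → ℝ) (α : Ordinal.{0}) : Prop :=
  ∀ R : (∀ i, Set (T i)) → (∀ i, Set (T i)), Relaxation (fun G => LS p G ⊓ G) R →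
    ∀ (i : Fin n) (s : T i), (∃ s' : T i, Dom p (iterate R α) i s' s) →
      ∃ s' ∈ iterate R α i, Dom p (iterate R α) i s' s

/-- Property C(α). -/
def PropC (p : ∀ i : Fin n, (∀ j, T j) → ℝ) (α : Ordinal.{0}) : Prop :=
  ∀ R : (∀ i, Set (T i)) → (∀ i, Set (T i)), Relaxation (fun G => LS p G ⊓ G) R →
    ∀ (i : Fin n) (s : T i), (∃ s' : T i, Dom p (iterate R α) i s' s) →
      ∃ s'' : T i, Dom p (iterate R α) i s'' s ∧ ¬ ∃ s' : T i, Dom p (iterate R α) i s' s''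

end Games

set_option linter.unusedVariables false

lemma iterate_zero' {D : Type u} [CompleteLattice D] (F : D → D) : iterate F 0 = ⊤ :=
  Ordinal.limitRecOn_zero _ _ _

lemma iterate_succ' {D : Type u} [CompleteLattice D] (F : D → D) (γ : Ordinal.{0}) :
    iterate F (Order.succ γ) = F (iterate F γ) :=
  Ordinal.limitRecOn_succ _ _ _ _

lemma iterate_limit' {D : Type u} [CompleteLattice D] (F : D → D) (β : Ordinal.{0})
    (hβ : Order.IsSuccLimit β) : iterate F β = ⨅ (γ : Ordinal) (_ : γ < β), iterate F γ :=
  Ordinal.limitRecOn_limit _ _ _ _ hβ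

lemma iter_anti {D : Type u} [CompleteLattice D] {F : D → D}
    (hF : ∀ γ : Ordinal.{0}, F (iterate F γ) ≤ iterate F γ) :
    ∀ β α : Ordinal.{0}, α ≤ β → iterate F β ≤ iterate F α := by
  intro β
  induction β using Ordinal.limitRecOn with
  | zero => intro a ha; rw [nonpos_iff_eq_zero.mp ha]
  | add_one γ ih =>
    rw [Ordinal.add_one_eq_succ]
    intro a ha
    rcases eq_or_lt_of_le ha with h | h
    · rw [h]
    · calc iterate F (Order.succ γ) = F (iterate F γ) := iterate_succ' _ _
        _ ≤ iterate F γ := hF γ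
        _ ≤ iterate F a := ih a (Order.lt_succ_iff.mp h)
  | limit β hβ ih =>
    intro a ha
    rcases eq_or_lt_of_le ha with h | h
    · rw [h]
    · rw [iterate_limit' _ _ hβ]
      exact iInf₂_le a h

theorem stmt_14 {n : ℕ} (hn : 2 ≤ n) {T : Fin n → Type u} [∀ i, Nonempty (T i)]
    (p : ∀ i : Fin n, (∀ j, T j) → ℝ) (α : Ordinal.{0}) (hC : PropC p α) :
    PropD p α := by
  intro R hRel i s hdom
  obtain ⟨s'', hdom'', hund⟩ := hC R hRel i s hdom
  refine ⟨s'', ?_, hdom''⟩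
  have hR : ∀ γ : Ordinal.{0}, R (iterate R γ) ≤ iterate R γ :=
    fun γ => (hRel γ).2.1 inf_le_right
  have key : ∀ β : Ordinal.{0}, β ≤ α → s'' ∈ iterate R β i := by
    intro β
    induction β using Ordinal.limitRecOn with
    | zero =>
      intro _
      rw [iterate_zero']
      trivial
    | add_one γ ih =>
      rw [Ordinal.add_one_eq_succ]
      intro h
      have hγ : γ ≤ α := le_trans (Order.le_succ γ) h
      have hs : s'' ∈ iterate R γ i := ih hγ
      rw [iterate_succ']
      by_contra hnot
      have h1 : (LS p (iterate R γ) ⊓ iterate R γ) i ⊆ R (iterate R γ) i := (hRel γ).1 i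
      have hnotLS : s'' ∉ LS p (iterate R γ) i := by
        intro hx
        exact hnot (h1 ⟨hx, hs⟩)
      rw [LS, Set.mem_setOf_eq, not_not] at hnotLS
      obtain ⟨t, _, hdt⟩ := hnotLS
      have hmono : iterate R α ≤ iterate R γ := iter_anti hR α γ hγ
      exact hund ⟨t, fun μ hμ => hdt μ (fun j hj => hmono j (hμ j hj))⟩
    | limit β hβ ih =>
      intro h
      rw [iterate_limit' _ _ hβ]
      simp only [iInf_apply, Set.iInf_eq_iInter, Set.mem_iInter]
      exact fun γ hγ => ih γ hγ (le_of_lt (lt_of_lt_of_le hγ h))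
  exact key α le_rfl
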